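/- Let Γ be a connected finite simplicial graph that is not the star of a vertex, with the pre-order u ≤ v iff lk(u) ⊆ st(v). If u, v are non-adjacent vertices with lk(u) ∩ lk(v) nonempty, then lk(u) ∩ lk(v) contains a vertex that is maximal in Γ with respect to ≤. -/
import Mathlib


variable {V : Type*} [Fintype V]

/-- The star of a vertex: the vertex together with its link (neighbor set). -/
def stS (Γ : SimpleGraph V) (v : V) : Set V := insert v (Γ.neighborSet v)

/-- The pre-order `u ≤ v` iff `lk(u) ⊆ st(v)`. -/
def leD (Γ : SimpleGraph V) (u v : V) : Prop := Γ.neighborSet u ⊆ stS Γ v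

/-- `u` and `v` are equivalent: `u ≤ v` and `v ≤ u`. -/
def equivD (Γ : SimpleGraph V) (u v : V) : Prop := leD Γ u v ∧ leD Γ v u

lemma leD_refl (Γ : SimpleGraph V) (u : V) : leD Γ u u := fun x hx => Or.inr hx

lemma leD_trans (Γ : SimpleGraph V) {a b c : V} (h1 : leD Γ a b) (h2 : leD Γ b c) :
    leD Γ a c := by
  simp only [leD, stS, Set.subset_def, Set.mem_insert_iff, SimpleGraph.mem_neighborSet] at *
  intro x hx
  rcases h1 x hx with hxb | hxb
  · subst hxb
    have hab : Γ.Adj x a := Γ.adj_symm hx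
    rcases h2 a hab with hac | hac
    · exact Or.inr (hac ▸ hx)
    · rcases h1 c (Γ.adj_symm hac) with hcb | hcb
      · exact Or.inl hcb.symm
      · exact Or.inr (Γ.adj_symm hcb)
  · exact h2 x hxb

/-- Any nonempty finset has an element maximal for a reflexive transitive relation. -/
lemma exists_rel_maximal (r : V → V → Prop) (hrefl : ∀ a, r a a)
    (htrans : ∀ {a b c}, r a b → r b c → r a c) (s : Finset V) (hs : s.Nonempty) :
    ∃ m ∈ s, ∀ z ∈ s, r m z → r z m := by
  classical
  induction s using Finset.induction with
  | empty => exact absurd hs (by simp)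
  | @insert a s ha ih =>
    rcases s.eq_empty_or_nonempty with rfl | hsne
    · exact ⟨a, by simp, by intro z hz _; simp at hz; rw [hz]; exact hrefl a⟩
    · obtain ⟨m, hm, hmax⟩ := ih hsne
      by_cases hma : r m a
      · refine ⟨a, Finset.mem_insert_self _ _, ?_⟩
        intro z hz haz
        rcases Finset.mem_insert.mp hz with rfl | hz
        · exact haz
        · exact htrans (hmax z hz (htrans hma haz)) hma
      · refine ⟨m, Finset.mem_insert_of_mem hm, ?_⟩
        intro z hz hmz
        rcases Finset.mem_insert.mp hz with rfl | hz
        · exact absurd hmz hma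
        · exact hmax z hz hmz

/-- If `Γ` is connected and not the star of a vertex, and `u, v` are non-adjacent vertices with
`lk(u) ∩ lk(v)` nonempty, then `lk(u) ∩ lk(v)` contains a `≤`-maximal vertex of `Γ`. -/
theorem maximal_vertex_in_common_link (Γ : SimpleGraph V)
    (hconn : Γ.Connected) (hnostar : ¬ ∃ v : V, stS Γ v = Set.univ)
    (u v : V) (huv : u ≠ v) (hnadj : ¬ Γ.Adj u v)
    (hne : (Γ.neighborSet u ∩ Γ.neighborSet v).Nonempty) :
    ∃ w ∈ Γ.neighborSet u ∩ Γ.neighborSet v, ∀ z : V, leD Γ w z → leD Γ z w := by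
  classical
  set S : Set V := Γ.neighborSet u ∩ Γ.neighborSet v with hS
  -- S is upward closed
  have hup : ∀ w ∈ S, ∀ z, leD Γ w z → z ∈ S := by
    intro w hw z hwz
    have huw : u ∈ Γ.neighborSet w := Γ.adj_symm hw.1
    have hvw : v ∈ Γ.neighborSet w := Γ.adj_symm hw.2
    have hu' := hwz huw
    have hv' := hwz hvw
    have hzu : z ∈ Γ.neighborSet u := by
      rcases hu' with h | h
      · subst h
        rcases hv' with h' | h'
        · exact absurd h'.symm huv
        · exact absurd h' hnadj
      · exact Γ.adj_symm h
    have hzv : z ∈ Γ.neighborSet v := by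
      rcases hv' with h | h
      · subst h
        rcases hu' with h' | h'
        · exact absurd h' huv
        · exact absurd (Γ.adj_symm h') hnadj
      · exact Γ.adj_symm h
    exact ⟨hzu, hzv⟩
  obtain ⟨m, hmS, hmax⟩ := exists_rel_maximal (leD Γ) (leD_refl Γ)
    (fun h1 h2 => leD_trans Γ h1 h2) S.toFinset
    (by rcases hne with ⟨x, hx⟩; exact ⟨x, Set.mem_toFinset.mpr hx⟩)
  refine ⟨m, Set.mem_toFinset.mp hmS, ?_⟩
  intro z hmz
  exact hmax z (Set.mem_toFinset.mpr (hup m (Set.mem_toFinset.mp hmS) z hmz)) hmz
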